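/- arXiv:2006.14346 — 9 statements merged into one kernel-verified Lean document; each statement's English description precedes it below -/
import Mathlib

section
/- Let ε ≥ 0 be a real number and let c : ℝ → ℝ be an ε-drift-bounded clock. Suppose that at real time t₁ a time interval [L, U] is obtained satisfying L ≤ t₁ ≤ U, and the caller then waits until a real time t₂ at which its local clock has advanced by at least (U − L)(1 + ε), i.e. c t₂ − c t₁ ≥ (U − L)·(1 + ε). Then L ≤ t₁ ≤ U ≤ t₂. In particular the returned timestamp U lies in the real-time interval [t₁, t₂] spanned by the call, and U is in the past at the moment the call returns. (Lemma 1, part 1: correctness of the GET_TS uncertainty wait.) -/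
/-- An ε-drift-bounded clock: a map from real (clock-master) time to local clock
readings whose rate relative to real time is within a factor `1 + ε`. -/
def DriftBoundedClock (ε : ℝ) (c : ℝ → ℝ) : Prop :=
  ∀ s t : ℝ, s ≤ t → (t - s) / (1 + ε) ≤ c t - c s ∧ c t - c s ≤ (1 + ε) * (t - s)

/-- Lemma 1, part 1: correctness of the GET_TS uncertainty wait. -/
theorem get_ts_correct (ε : ℝ) (hε : 0 ≤ ε) (c : ℝ → ℝ)
    (hc : DriftBoundedClock ε c)
    (L U t₁ t₂ : ℝ)
    (hL : L ≤ t₁) (hU : t₁ ≤ U) (ht : t₁ ≤ t₂)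
    (hwait : c t₂ - c t₁ ≥ (U - L) * (1 + ε)) :
    L ≤ t₁ ∧ t₁ ≤ U ∧ U ≤ t₂ := by
  refine ⟨hL, hU, ?_⟩
  have hpos : (0:ℝ) < 1 + ε := by linarith
  have h2 := (hc t₁ t₂ ht).2
  nlinarith [mul_le_mul_of_nonneg_left (sub_le_sub_right ht L) hpos.le]
end

section
/- Let ε ≥ 0 be a real number and let c : ℝ → ℝ be an ε-drift-bounded clock. Suppose a lock is held throughout the real-time interval [t_lock, t_unlock]; that at some real time t₁ with t_lock ≤ t₁ a time interval [L, U] is obtained satisfying L ≤ t₁ ≤ U; and that the caller waits until a real time t₂ ≤ t_unlock at which c t₂ − c t₁ ≥ (U − L)·(1 + ε). Then t_lock ≤ U ≤ t_unlock, i.e. the lock is held at the global (real) time equal to the returned write timestamp U. (Lemma 1, part 2: every committed write transaction holds all its locks at the global time given by its write timestamp.) -/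
/-- Lemma 1, part 2: every committed write transaction holds all its locks at the
global time given by its write timestamp. -/
theorem lock_held_at_write_timestamp (ε : ℝ) (hε : 0 ≤ ε) (c : ℝ → ℝ)
    (hc : DriftBoundedClock ε c)
    (tLock tUnlock L U t₁ t₂ : ℝ)
    (hlock : tLock ≤ t₁)
    (hL : L ≤ t₁) (hU : t₁ ≤ U)
    (ht : t₁ ≤ t₂) (hunlock : t₂ ≤ tUnlock)
    (hwait : c t₂ - c t₁ ≥ (U - L) * (1 + ε)) :
    tLock ≤ U ∧ U ≤ tUnlock := by
  have hpos : (0:ℝ) < 1 + ε := by linarith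
  have h2 := (hc t₁ t₂ ht).2
  have hle : (U - L) * (1 + ε) ≤ (1 + ε) * (t₂ - t₁) := le_trans hwait h2
  have : U - L ≤ t₂ - t₁ := by
    nlinarith
  constructor <;> linarith
end

section
/- Let ε ≥ 0 be a real number and let c : ℝ → ℝ be an ε-drift-bounded clock. Let (s, m, r) be a valid synchronization record, i.e. real numbers with s ≤ m ≤ r. Then for every real time t with t ≥ r, the computed lower bound satisfies m + (c t − c r)·(1 − ε) ≤ t. (Correctness of the lower-bound function LB in FaRMv2's synchronization algorithm.) -/
/-- Correctness of the lower-bound function LB in FaRMv2's synchronization algorithm. -/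
theorem lb_correct (ε : ℝ) (hε : 0 ≤ ε) (c : ℝ → ℝ)
    (hc : DriftBoundedClock ε c)
    (s m r : ℝ) (hsm : s ≤ m) (hmr : m ≤ r)
    (t : ℝ) (ht : r ≤ t) :
    m + (c t - c r) * (1 - ε) ≤ t := by
  obtain ⟨h1, h2⟩ := hc r t ht
  have hpos : (0:ℝ) < 1 + ε := by linarith
  have h0 : 0 ≤ c t - c r := le_trans (div_nonneg (by linarith) hpos.le) h1
  nlinarith [sq_nonneg ε, mul_nonneg hε (sub_nonneg.mpr ht)]
end

section
/- Let ε ≥ 0 be a real number and let c : ℝ → ℝ be an ε-drift-bounded clock. Let (s, m, r) be a valid synchronization record, i.e. real numbers with s ≤ m ≤ r. Then for every real time t with t ≥ s, the computed upper bound satisfies t ≤ m + (c t − c s)·(1 + ε). (Correctness of the upper-bound function UB in FaRMv2's synchronization algorithm.) -/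
/-- Correctness of the upper-bound function UB in FaRMv2's synchronization algorithm. -/
theorem ub_correct (ε : ℝ) (hε : 0 ≤ ε) (c : ℝ → ℝ)
    (hc : DriftBoundedClock ε c)
    (s m r : ℝ) (hsm : s ≤ m) (hmr : m ≤ r)
    (t : ℝ) (ht : s ≤ t) :
    t ≤ m + (c t - c s) * (1 + ε) := by
  have hpos : (0:ℝ) < 1 + ε := by linarith
  have h := (hc s t ht).1
  have h2 : t - s ≤ (c t - c s) * (1 + ε) := by
    have := (div_le_iff₀ hpos).mp h
    linarith
  linarith
end

section
/- Let ε ≥ 0 be a real number and let c : ℝ → ℝ be an ε-drift-bounded clock. Let (s, m, r) be a valid synchronization record, i.e. real numbers with s ≤ m ≤ r. Then for every real time t with t ≥ r, the interval computed by the TIME function contains the true current time: m + (c t − c r)·(1 − ε) ≤ t ≤ m + (c t − c s)·(1 + ε). (Correctness of the time interval computed from any past synchronization in the current configuration.) -/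
/-- Correctness of the time interval computed by TIME from any past synchronization. -/
theorem time_interval_correct (ε : ℝ) (hε : 0 ≤ ε) (c : ℝ → ℝ)
    (hc : DriftBoundedClock ε c)
    (s m r : ℝ) (hsm : s ≤ m) (hmr : m ≤ r)
    (t : ℝ) (ht : r ≤ t) :
    m + (c t - c r) * (1 - ε) ≤ t ∧ t ≤ m + (c t - c s) * (1 + ε) := by
  have hpos : (0:ℝ) < 1 + ε := by linarith
  obtain ⟨h1, h2⟩ := hc r t ht
  obtain ⟨h3, h4⟩ := hc s t (by linarith)
  have h1' : (t - r) ≤ (c t - c r) * (1 + ε) := by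
    rw [div_le_iff₀ hpos] at h1; linarith
  have h3' : (t - s) ≤ (c t - c s) * (1 + ε) := by
    rw [div_le_iff₀ hpos] at h3; linarith
  have hnn : 0 ≤ c t - c r := by nlinarith
  constructor
  · nlinarith [sq_nonneg ε, mul_nonneg hnn hε]
  · nlinarith
end

section
/- Let ε ≥ 0 be a real number, let c : ℝ → ℝ be an ε-drift-bounded clock, and let (sᵢ, mᵢ, rᵢ) for i in a nonempty finite index set be valid synchronization records (sᵢ ≤ mᵢ ≤ rᵢ for each i). Then for every real time t with t ≥ rᵢ for all i, the tightest combined bounds are still correct: max over i of (mᵢ + (c t − c rᵢ)·(1 − ε)) ≤ t ≤ min over i of (mᵢ + (c t − c sᵢ)·(1 + ε)). (Correctness of FaRMv2's optimized variant of Marzullo's algorithm, which computes the tightest lower and upper bounds using all available past synchronizations.) -/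
/-- Correctness of FaRMv2's optimized variant of Marzullo's algorithm: the tightest
combined bounds over all available past synchronizations still bracket real time. -/
theorem marzullo_optimized_correct (ε : ℝ) (hε : 0 ≤ ε) (c : ℝ → ℝ)
    (hc : DriftBoundedClock ε c)
    {ι : Type*} (I : Finset ι) (hI : I.Nonempty)
    (s m r : ι → ℝ)
    (hsm : ∀ i ∈ I, s i ≤ m i) (hmr : ∀ i ∈ I, m i ≤ r i)
    (t : ℝ) (ht : ∀ i ∈ I, r i ≤ t) :
    I.sup' hI (fun i => m i + (c t - c (r i)) * (1 - ε)) ≤ t ∧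
      t ≤ I.inf' hI (fun i => m i + (c t - c (s i)) * (1 + ε)) := by
  have hpos : (0:ℝ) < 1 + ε := by linarith
  constructor
  · apply Finset.sup'_le
    intro i hi
    obtain ⟨h1, h2⟩ := hc (r i) t (ht i hi)
    have h1' : t - r i ≤ (c t - c (r i)) * (1 + ε) := by
      rw [← div_le_iff₀ hpos]; exact h1
    have hmr' := hmr i hi
    have ht' := ht i hi
    rcases le_or_gt ε 1 with hε1 | hε1
    · nlinarith
    · nlinarith
  · apply Finset.le_inf'
    intro i hi
    have hst : s i ≤ t := le_trans (hsm i hi) (le_trans (hmr i hi) (ht i hi))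
    obtain ⟨h1, h2⟩ := hc (s i) t hst
    have h1' : t - s i ≤ (c t - c (s i)) * (1 + ε) := by
      rw [← div_le_iff₀ hpos]; exact h1
    have := hsm i hi
    linarith
end

section
/- Let ε be a real number with 0 ≤ ε ≤ 1, and for a synchronization record with master time m and local receive time T_recv define the lower-bound function ℓ(m, T_recv, T) = m + (T − T_recv)·(1 − ε) for a local clock reading T. Suppose two synchronization records (m, T_recv) and (m', T_recv') satisfy ℓ(m', T_recv', T₀) ≥ ℓ(m, T_recv, T₀) at some local clock reading T₀ (the SYNC update condition for replacing the stored record). Then for every local clock reading T₁ ≥ T₀, ℓ(m', T_recv', T₁) ≥ ℓ(m, T_recv, T₀). Consequently, under the SYNC update rule the lower bound L reported by TIME on any single thread is non-decreasing in the local clock reading, even across synchronization-state updates. -/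
/-- The lower bound computed from a synchronization record with master time `m` and
local receive time `Trecv`, at local clock reading `T`, with drift bound `ε`. -/
def lowerBound (ε m Trecv T : ℝ) : ℝ := m + (T - Trecv) * (1 - ε)

/-- Under the SYNC update rule, the lower bound reported by TIME on any single thread
is non-decreasing in the local clock reading, even across synchronization-state updates. -/
theorem lower_bound_monotone_across_updates (ε : ℝ) (hε₀ : 0 ≤ ε) (hε₁ : ε ≤ 1)
    (m Trecv m' Trecv' T₀ : ℝ)
    (hupdate : lowerBound ε m' Trecv' T₀ ≥ lowerBound ε m Trecv T₀) :
    ∀ T₁ : ℝ, T₀ ≤ T₁ → lowerBound ε m' Trecv' T₁ ≥ lowerBound ε m Trecv T₀ := by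
  intro T₁ h
  have : lowerBound ε m' Trecv' T₀ ≤ lowerBound ε m' Trecv' T₁ := by
    unfold lowerBound
    nlinarith
  linarith
end

section
/- Let ε ≥ 0 be a real number and let c₁, c₂ : ℝ → ℝ be ε-drift-bounded clocks on two machines, with valid synchronization records (s₁, m₁, r₁) and (s₂, m₂, r₂) respectively (sᵢ ≤ mᵢ ≤ rᵢ). Suppose an event occurs at real time t₁ on machine 1 with t₁ ≥ r₁ and yields the interval [L₁, U₁] with L₁ = m₁ + (c₁ t₁ − c₁ r₁)·(1 − ε), and a later event occurs at real time t₂ > t₁ on machine 2 with t₂ ≥ r₂ and yields the interval [L₂, U₂] with U₂ = m₂ + (c₂ t₂ − c₂ s₂)·(1 + ε). Then U₂ > L₁. (Global monotonicity of FaRMv2 time intervals: if an event at time [L₁, U₁] anywhere in the cluster happens before an event at time [L₂, U₂] anywhere in the cluster, then U₂ > L₁.) -/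
/-- Global monotonicity of FaRMv2 time intervals: if an event at time `[L₁, U₁]`
anywhere in the cluster happens before an event at time `[L₂, U₂]` anywhere in the
cluster, then `U₂ > L₁`. -/
theorem global_monotonicity (ε : ℝ) (hε : 0 ≤ ε)
    (c₁ c₂ : ℝ → ℝ)
    (hc₁ : DriftBoundedClock ε c₁) (hc₂ : DriftBoundedClock ε c₂)
    (s₁ m₁ r₁ s₂ m₂ r₂ : ℝ)
    (hsm₁ : s₁ ≤ m₁) (hmr₁ : m₁ ≤ r₁)
    (hsm₂ : s₂ ≤ m₂) (hmr₂ : m₂ ≤ r₂)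
    (t₁ t₂ L₁ U₂ : ℝ)
    (ht₁ : r₁ ≤ t₁) (ht₂ : r₂ ≤ t₂) (hlt : t₁ < t₂)
    (hL₁ : L₁ = m₁ + (c₁ t₁ - c₁ r₁) * (1 - ε))
    (hU₂ : U₂ = m₂ + (c₂ t₂ - c₂ s₂) * (1 + ε)) :
    U₂ > L₁ := by
  have hε1 : (0:ℝ) < 1 + ε := by linarith
  obtain ⟨h1l, h1u⟩ := hc₁ r₁ t₁ ht₁
  obtain ⟨h2l, h2u⟩ := hc₂ s₂ t₂ (le_trans (le_trans hsm₂ hmr₂) ht₂)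
  -- U₂ ≥ t₂
  have hU : t₂ ≤ U₂ := by
    have : (t₂ - s₂) ≤ (c₂ t₂ - c₂ s₂) * (1 + ε) := by
      have := (div_le_iff₀ hε1).mp h2l
      nlinarith
    linarith
  -- L₁ ≤ t₁
  have hL : L₁ ≤ t₁ := by
    rcases le_or_gt ε 1 with h | h
    · nlinarith [mul_le_mul_of_nonneg_right h1u (by linarith : (0:ℝ) ≤ 1 - ε),
        mul_nonneg (mul_nonneg hε hε) (by linarith : (0:ℝ) ≤ t₁ - r₁)]
    · have h0 : 0 ≤ c₁ t₁ - c₁ r₁ :=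
        le_trans (div_nonneg (by linarith) hε1.le) h1l
      nlinarith
  linarith
end

section
/- Let ε ≥ 0 be a real number and let c_B : ℝ → ℝ be an ε-drift-bounded clock. Suppose transaction B obtains its write timestamp by a GET_TS call on machine B: at real time t_B1 it obtains an interval [L_B, U_B] with L_B ≤ t_B1 ≤ U_B, and it returns at real time t_B2 with c_B t_B2 − c_B t_B1 ≥ (U_B − L_B)·(1 + ε), yielding write timestamp U_B. Suppose transaction A subsequently invokes GET_TS on any machine at a real time t_A ≥ t_B2, obtaining an interval [L_A, U_A] with L_A ≤ t_A ≤ U_A and hence read timestamp U_A. Then U_A ≥ U_B. (Strictness: if transaction A starts after transaction B commits, the read timestamp of A is greater than or equal to the write timestamp of B.) -/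
/-- Strictness: if transaction A starts after transaction B commits, the read
timestamp of A is greater than or equal to the write timestamp of B. -/
theorem strictness (ε : ℝ) (hε : 0 ≤ ε)
    (cB : ℝ → ℝ) (hcB : DriftBoundedClock ε cB)
    (LB UB tB1 tB2 : ℝ)
    (hLB : LB ≤ tB1) (hUB : tB1 ≤ UB) (htB : tB1 ≤ tB2)
    (hwaitB : cB tB2 - cB tB1 ≥ (UB - LB) * (1 + ε))
    (LA UA tA : ℝ)
    (htA : tB2 ≤ tA)
    (hLA : LA ≤ tA) (hUA : tA ≤ UA) :
    UA ≥ UB := by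
  have hpos : (0:ℝ) < 1 + ε := by linarith
  have h2 := (hcB tB1 tB2 htB).2
  have h3 : (UB - LB) * (1 + ε) ≤ (1 + ε) * (tB2 - tB1) := le_trans hwaitB h2
  have h4 : UB - LB ≤ tB2 - tB1 := by nlinarith
  linarith
end
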